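/- In real quantum theory, operational independence does not imply product form: the real 4×4 matrix ρ = (1/4)(I ⊗ I − J ⊗ J) is symmetric, positive semi-definite, has trace one, satisfies tr(ρ(E ⊗ F)) = (1/2)tr(E)·(1/2)tr(F) for all symmetric real 2×2 matrices E, F, and yet ρ is not equal to σ ⊗ τ for any real 2×2 matrices σ, τ. -/

import Mathlib

open Kronecker Matrix

/-- 2×2 rotation matrix J = [[0,-1],[1,0]]. -/
def Jmat : Matrix (Fin 2) (Fin 2) ℝ := !![0, -1; 1, 0]

/-- The real state ρ = (1/4)(I ⊗ I − J ⊗ J). -/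
noncomputable def rhoIJ : Matrix (Fin 2 × Fin 2) (Fin 2 × Fin 2) ℝ :=
  (1 / 4 : ℝ) • ((1 : Matrix (Fin 2) (Fin 2) ℝ) ⊗ₖ (1 : Matrix (Fin 2) (Fin 2) ℝ)
    - Jmat ⊗ₖ Jmat)


lemma rho_apply (i j : Fin 2 × Fin 2) :
    rhoIJ i j = (1/4 : ℝ) * ((if i.1 = j.1 then 1 else 0) * (if i.2 = j.2 then 1 else 0)
      - Jmat i.1 j.1 * Jmat i.2 j.2) := by
  simp only [rhoIJ, Matrix.smul_apply, Matrix.sub_apply, Matrix.kroneckerMap_apply,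
    Matrix.one_apply, smul_eq_mul]


theorem RQT_operational_independence_not_product :
    rhoIJ.IsSymm ∧ rhoIJ.PosSemidef ∧ rhoIJ.trace = 1 ∧
    (∀ E F : Matrix (Fin 2) (Fin 2) ℝ, E.IsSymm → F.IsSymm →
      (rhoIJ * (E ⊗ₖ F)).trace = ((1 / 2 : ℝ) * E.trace) * ((1 / 2 : ℝ) * F.trace)) ∧
    ¬ ∃ (σ τ : Matrix (Fin 2) (Fin 2) ℝ), rhoIJ = σ ⊗ₖ τ := by
  have hsymm : rhoIJ.IsSymm := by
    ext ⟨i, k⟩ ⟨j, l⟩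
    simp only [Matrix.transpose_apply, rho_apply]
    fin_cases i <;> fin_cases k <;> fin_cases j <;> fin_cases l <;> norm_num [Jmat]
  refine ⟨hsymm, ⟨hsymm, ?_⟩, ?_, ?_, ?_⟩
  · intro x
    have : star x ⬝ᵥ rhoIJ *ᵥ x =
        (1/4 : ℝ) * ((x (0,0) - x (1,1))^2 + (x (0,1) + x (1,0))^2) := by
      simp [dotProduct, Matrix.mulVec, Fintype.sum_prod_type, Fin.sum_univ_two, rho_apply, Jmat]
      ring
    have key : (x.sum fun i xi => x.sum fun j xj => star xi * rhoIJ i j * xj) =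
        star ⇑x ⬝ᵥ rhoIJ *ᵥ ⇑x := by
      simp [Finsupp.sum_fintype, dotProduct, Matrix.mulVec, Finset.mul_sum, mul_assoc]
    rw [key, this]
    positivity
  · simp [Matrix.trace, Matrix.diag, Fintype.sum_prod_type, Fin.sum_univ_two, rho_apply, Jmat]
    norm_num
  · intro E F hE hF
    have hE' : E 0 1 = E 1 0 := congrFun (congrFun hE 1) 0
    have hF' : F 0 1 = F 1 0 := congrFun (congrFun hF 1) 0
    simp [Matrix.trace, Matrix.diag, Matrix.mul_apply, Fintype.sum_prod_type,
      Fin.sum_univ_two, rho_apply, Jmat, Matrix.kroneckerMap_apply]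
    ring_nf
    rw [hE', hF']
    ring
  · rintro ⟨σ, τ, h⟩
    have h1 : σ 0 0 * τ 0 0 = 1/4 := by
      have := congrFun (congrFun h ((0:Fin 2),(0:Fin 2))) ((0:Fin 2),(0:Fin 2))
      simpa [rho_apply, Jmat, Matrix.kroneckerMap_apply] using this.symm
    have h2 : σ 0 0 * τ 1 0 = 0 := by
      have := congrFun (congrFun h ((0:Fin 2),(1:Fin 2))) ((0:Fin 2),(0:Fin 2))
      simpa [rho_apply, Jmat, Matrix.kroneckerMap_apply] using this.symm
    have h3 : σ 0 1 * τ 1 0 = 1/4 := by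
      have := congrFun (congrFun h ((0:Fin 2),(1:Fin 2))) ((1:Fin 2),(0:Fin 2))
      simpa [rho_apply, Jmat, Matrix.kroneckerMap_apply] using this.symm
    have hσ : σ 0 0 ≠ 0 := by intro h0; rw [h0] at h1; simp at h1
    have hτ : τ 1 0 = 0 := by
      rcases mul_eq_zero.mp h2 with h' | h'
      · exact absurd h' hσ
      · exact h'
    rw [hτ] at h3; simp at h3
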